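/- Define t_a^a = C(a,2) − 1 and t_a^{i+1} = ⌊((i+1)/(i-1)) · t_a^i⌋ for i ≥ a. Then for every integer n ≥ a ≥ 3, every K_a-free graph on n vertices has at most t_a^n edges. -/

import Mathlib

/-- Auxiliary recursion: `turanTAux a k` is `t_a^{a+k}` where
`t_a^a = C(a,2) - 1` and `t_a^{i+1} = ⌊((i+1)/(i-1)) · t_a^i⌋`. -/
def turanTAux (a : ℕ) : ℕ → ℕ
  | 0 => a.choose 2 - 1
  | k + 1 => ((a + k + 1) * turanTAux a k) / (a + k - 1)

/-- `turanT a n = t_a^n` for `n ≥ a`. -/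
def turanT (a n : ℕ) : ℕ := turanTAux a (n - a)

open Finset SimpleGraph

lemma turanTAux_bound (a : ℕ) (ha : 3 ≤ a) :
    ∀ k (G : SimpleGraph (Fin (a + k))), G.CliqueFree a →
      ∀ (_ : DecidableRel G.Adj), G.edgeFinset.card ≤ turanTAux a k := by
  intro k
  induction k with
  | zero =>
    intro G hG _
    have htop : ¬ (⊤ : SimpleGraph (Fin (a + 0))).CliqueFree a := by
      apply SimpleGraph.IsNClique.not_cliqueFree (s := Finset.univ)
      refine ⟨fun x _ y _ hxy => hxy, by simp⟩
    have hlt : G < ⊤ := by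
      rcases lt_or_eq_of_le (le_top : G ≤ ⊤) with h | h
      · exact h
      · exact absurd (h ▸ hG) htop
    have hss : G.edgeFinset ⊂ (⊤ : SimpleGraph (Fin (a + 0))).edgeFinset :=
      edgeFinset_ssubset_edgeFinset.2 hlt
    have hcard := Finset.card_lt_card hss
    rw [card_edgeFinset_top_eq_card_choose_two] at hcard
    simp only [Fintype.card_fin] at hcard
    have hcard' : G.edgeFinset.card < a.choose 2 := hcard
    show G.edgeFinset.card ≤ a.choose 2 - 1
    omega
  | succ k ih =>
    intro G hG _
    classical
    set t := turanTAux a k with ht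
    -- for each vertex v, the edges avoiding v number at most t
    have hfil : ∀ v : Fin (a + k + 1),
        (G.edgeFinset.filter (fun e => v ∉ e)).card ≤ t := by
      intro v
      set G' : SimpleGraph (Fin (a + k)) := G.comap v.succAbove with hG'
      have hG'free : G'.CliqueFree a :=
        hG.comap (SimpleGraph.Embedding.comap (Fin.succAboveEmb v) G).isContained
      have himg : G'.edgeFinset.image (Sym2.map v.succAbove)
          = G.edgeFinset.filter (fun e => v ∉ e) := by
        ext e
        simp only [Finset.mem_image, Finset.mem_filter, mem_edgeFinset]
        constructor
        · rintro ⟨e', he', rfl⟩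
          refine e'.ind (fun x y hxy => ?_) he'
          simp only [Sym2.map_pair_eq]
          constructor
          · exact hxy
          · intro hv
            rw [Sym2.mem_iff] at hv
            rcases hv with h | h <;> exact (Fin.succAbove_ne v _) h.symm
        · rintro ⟨he, hv⟩
          refine e.ind (fun x y hxy hv => ?_) he hv
          rw [Sym2.mem_iff] at hv
          push_neg at hv
          obtain ⟨x', hx'⟩ := Fin.exists_succAbove_eq (Ne.symm hv.1)
          obtain ⟨y', hy'⟩ := Fin.exists_succAbove_eq (Ne.symm hv.2)
          refine ⟨s(x', y'), ?_, by rw [Sym2.map_pair_eq, hx', hy']⟩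
          show G.Adj (v.succAbove x') (v.succAbove y')
          rw [hx', hy']; exact hxy
      have hinj : Function.Injective (Sym2.map v.succAbove) :=
        Sym2.map.injective (Fin.succAbove_right_injective)
      calc (G.edgeFinset.filter (fun e => v ∉ e)).card
          = G'.edgeFinset.card := by rw [← himg, Finset.card_image_of_injective _ hinj]
        _ ≤ t := ih G' hG'free _
    -- double counting
    have hmem2 : ∀ e ∈ G.edgeFinset,
        ((univ : Finset (Fin (a + k + 1))).filter (fun v => v ∈ e)).card = 2 := by
      intro e he
      rw [mem_edgeFinset] at he
      refine e.ind (fun x y hxy => ?_) he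
      have hne : x ≠ y := hxy.ne
      have : (univ : Finset (Fin (a + k + 1))).filter (fun v => v ∈ s(x, y)) = {x, y} := by
        ext v; simp [Sym2.mem_iff]
      rw [this, Finset.card_insert_of_notMem (by simp [hne]), Finset.card_singleton]
    have hsum : (a + k - 1) * G.edgeFinset.card
        = ∑ v : Fin (a + k + 1), (G.edgeFinset.filter (fun e => v ∉ e)).card := by
      calc (a + k - 1) * G.edgeFinset.card
          = ∑ e ∈ G.edgeFinset, (a + k - 1) := by rw [Finset.sum_const, smul_eq_mul, mul_comm]
        _ = ∑ e ∈ G.edgeFinset,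
              ((univ : Finset (Fin (a + k + 1))).filter (fun v => v ∉ e)).card := by
            refine Finset.sum_congr rfl fun e he => ?_
            rw [Finset.filter_not, Finset.card_sdiff_of_subset (Finset.filter_subset _ _),
              hmem2 e he, Finset.card_univ, Fintype.card_fin]
            omega
        _ = ∑ e ∈ G.edgeFinset, ∑ v : Fin (a + k + 1), (if v ∉ e then 1 else 0) := by
            refine Finset.sum_congr rfl fun e _ => ?_
            rw [Finset.card_filter]; rfl
        _ = ∑ v : Fin (a + k + 1), ∑ e ∈ G.edgeFinset, (if v ∉ e then 1 else 0) :=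
            Finset.sum_comm
        _ = ∑ v : Fin (a + k + 1), (G.edgeFinset.filter (fun e => v ∉ e)).card := by
            refine Finset.sum_congr rfl fun v _ => ?_
            rw [Finset.card_filter]
    have hle : (a + k - 1) * G.edgeFinset.card ≤ (a + k + 1) * t := by
      rw [hsum]
      calc ∑ v : Fin (a + k + 1), (G.edgeFinset.filter (fun e => v ∉ e)).card
          ≤ ∑ _v : Fin (a + k + 1), t := Finset.sum_le_sum fun v _ => hfil v
        _ = (a + k + 1) * t := by rw [Finset.sum_const, Finset.card_univ, Fintype.card_fin,
              smul_eq_mul]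
    show G.edgeFinset.card ≤ (a + k + 1) * t / (a + k - 1)
    rw [Nat.le_div_iff_mul_le (by omega : 0 < a + k - 1)]
    exact le_of_eq_of_le (mul_comm _ _) hle

theorem cliqueFree_card_le_turanT (n a : ℕ) (ha : 3 ≤ a) (han : a ≤ n)
    (G : SimpleGraph (Fin n)) (hG : G.CliqueFree a) :
    G.edgeSet.ncard ≤ turanT a n := by
  classical
  obtain ⟨k, rfl⟩ : ∃ k, n = a + k := ⟨n - a, (Nat.add_sub_cancel' han).symm⟩
  have h := turanTAux_bound a ha k G hG (Classical.decRel _)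
  have hcard : G.edgeSet.ncard = G.edgeFinset.card := by
    rw [Set.ncard_eq_toFinset_card']
    congr 1
  rw [hcard, turanT, Nat.add_sub_cancel_left]
  exact h
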